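/- Let (Ω̂, 𝓑̂, P̂) be a probability space carrying independent unit-exponentially distributed random variables E₁, E₂, let f₁, f₂ : [0,∞) → [0,∞) be measurable with ∫_0^t f_i(s) ds < ∞ for all t ≥ 0 and ∫_0^∞ f_i(s) ds = ∞, set Λ_i(t) := ∫_0^t f_i(s) ds, T₁ := inf{t > 0 : Λ₁(t) ≥ E₁} and T₂ := T₁ + inf{t > 0 : Λ₂(t) ≥ E₂}. Then for every bounded measurable Z : [0,∞) → [0,∞) and all 0 ≤ t ≤ s: ∫_{Ω̂} 1_{{t < T₁}} 1_{{T₂ ≤ s}} Z(T₂) dP̂ = ∫_t^s ( ∫_0^{s−y} Z(y + x) e^{−Λ₂(x)} f₂(x) dx ) e^{−Λ₁(y)} f₁(y) dy. -/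

import Mathlib

open MeasureTheory ProbabilityTheory Set

open MeasureTheory ProbabilityTheory Set Filter Topology Real
open scoped ENNReal

namespace Stmt18

structure Nice (f : ℝ → ℝ) : Prop where
  meas : Measurable f
  nonneg : ∀ s, 0 ≤ f s
  zero : ∀ s ≤ (0:ℝ), f s = 0
  fin : ∀ t : ℝ, ∫⁻ s in Set.Ioc (0:ℝ) t, ENNReal.ofReal (f s) < ⊤
  inf : ∫⁻ s in Set.Ioi (0:ℝ), ENNReal.ofReal (f s) = ⊤

noncomputable def lam (f : ℝ → ℝ) (t : ℝ) : ℝ := ∫ s in Set.Ioc 0 t, f s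

noncomputable def ginv (f : ℝ → ℝ) (e : ℝ) : ℝ := sInf {t | 0 < t ∧ e ≤ lam f t}

variable {f : ℝ → ℝ}

theorem Nice.intOn (hf : Nice f) (t : ℝ) : IntegrableOn f (Ioc 0 t) := by
  constructor
  · exact hf.meas.aestronglyMeasurable
  · rw [hasFiniteIntegral_iff_ofReal]
    · exact hf.fin t
    · exact Eventually.of_forall fun x => hf.nonneg x

theorem Nice.intOn' (hf : Nice f) (a b : ℝ) : IntegrableOn f (Ioc a b) := by
  have h1 : IntegrableOn f (Iic 0) := by
    have : IntegrableOn (fun _ : ℝ => (0:ℝ)) (Iic 0) := integrableOn_zero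
    exact this.congr_fun (fun x hx => (hf.zero x hx).symm) measurableSet_Iic
  refine ((h1.union (hf.intOn b)).mono_set fun x hx => ?_)
  rcases le_or_gt x 0 with h | h
  · exact Or.inl h
  · exact Or.inr ⟨h, hx.2⟩

theorem Nice.intervalIntegrable (hf : Nice f) (a b : ℝ) : IntervalIntegrable f volume a b := by
  rw [intervalIntegrable_iff, Set.uIoc]
  exact hf.intOn' (min a b) (max a b)


theorem lam_nonpos (hf : Nice f) {t : ℝ} (ht : t ≤ 0) : lam f t = 0 := by
  unfold lam
  rw [Set.Ioc_eq_empty (by exact fun h => absurd (h.trans_le ht) (lt_irrefl 0)),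
    Measure.restrict_empty, integral_zero_measure]

theorem lam_mono (hf : Nice f) : Monotone (lam f) := by
  intro a b hab
  unfold lam
  apply setIntegral_mono_set (hf.intOn b)
  · exact Eventually.of_forall fun x => hf.nonneg x
  · exact HasSubset.Subset.eventuallyLE (Set.Ioc_subset_Ioc le_rfl hab)

theorem lam_nonneg (hf : Nice f) (t : ℝ) : 0 ≤ lam f t := by
  rcases le_or_gt t 0 with h | h
  · rw [lam_nonpos hf h]
  · rw [← lam_nonpos hf (le_refl 0)]
    exact lam_mono hf h.le

theorem lam_eq_primitive (hf : Nice f) (t : ℝ) : lam f t = ∫ s in (0:ℝ)..t, f s := by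
  rcases le_or_gt 0 t with h | h
  · rw [intervalIntegral.integral_of_le h]; rfl
  · rw [lam_nonpos hf h.le, intervalIntegral.integral_of_ge h.le]
    have : ∫ s in Set.Ioc t 0, f s = 0 := by
      apply setIntegral_eq_zero_of_forall_eq_zero
      exact fun x hx => hf.zero x hx.2
    rw [this, neg_zero]

theorem lam_cont (hf : Nice f) : Continuous (lam f) := by
  have : lam f = fun t => ∫ s in (0:ℝ)..t, f s := funext (lam_eq_primitive hf)
  rw [this]
  exact intervalIntegral.continuous_primitive (fun a b => hf.intervalIntegrable a b) 0

theorem lintegral_Ioc_ofReal (hf : Nice f) (t : ℝ) :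
    ∫⁻ s in Set.Ioc (0:ℝ) t, ENNReal.ofReal (f s) = ENNReal.ofReal (lam f t) :=
  (ofReal_integral_eq_lintegral_ofReal (hf.intOn t)
    (Eventually.of_forall fun x => hf.nonneg x)).symm

theorem lam_tendsto (hf : Nice f) : Tendsto (lam f) atTop atTop := by
  apply tendsto_atTop_atTop_of_monotone (lam_mono hf)
  intro b
  by_contra hcon
  push_neg at hcon
  set μ := volume.withDensity (fun s => ENNReal.ofReal (f s)) with hμ
  have hap : ∀ s : Set ℝ, MeasurableSet s → μ s = ∫⁻ x in s, ENNReal.ofReal (f x) := by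
    intro s hs
    rw [hμ, withDensity_apply _ hs]
  have hU : Set.Ioi (0:ℝ) = ⋃ n : ℕ, Set.Ioc (0:ℝ) n := by
    ext x
    simp only [Set.mem_Ioi, Set.mem_iUnion, Set.mem_Ioc]
    constructor
    · intro hx
      obtain ⟨n, hn⟩ := exists_nat_ge x
      exact ⟨n, hx, hn⟩
    · rintro ⟨n, hn, -⟩; exact hn
  have hmono : Monotone fun n : ℕ => Set.Ioc (0:ℝ) n := by
    intro m n hmn
    exact Set.Ioc_subset_Ioc le_rfl (by exact_mod_cast hmn)
  have h1 : μ (Set.Ioi (0:ℝ)) = ⨆ n : ℕ, μ (Set.Ioc (0:ℝ) n) := by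
    rw [hU]
    exact hmono.measure_iUnion
  have h2 : μ (Set.Ioi (0:ℝ)) = ⊤ := by rw [hap _ measurableSet_Ioi]; exact hf.inf
  have h3 : ∀ n : ℕ, μ (Set.Ioc (0:ℝ) n) ≤ ENNReal.ofReal b := by
    intro n
    rw [hap _ measurableSet_Ioc, lintegral_Ioc_ofReal hf]
    exact ENNReal.ofReal_le_ofReal (hcon n).le
  rw [h2] at h1
  have : (⊤ : ENNReal) ≤ ENNReal.ofReal b := h1.le.trans (iSup_le h3)
  exact absurd this (by simp [ENNReal.ofReal_lt_top.ne])


theorem ginv_setOf (hf : Nice f) {e : ℝ} (he : 0 < e) :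
    {t | 0 < t ∧ e ≤ lam f t} = {t | e ≤ lam f t} := by
  ext t
  simp only [Set.mem_setOf_eq, and_iff_right_iff_imp]
  intro ht
  by_contra h
  push_neg at h
  rw [lam_nonpos hf h] at ht
  exact absurd (he.trans_le ht) (lt_irrefl 0)

theorem ginv_S_nonempty (hf : Nice f) (e : ℝ) : {t | 0 < t ∧ e ≤ lam f t}.Nonempty := by
  obtain ⟨t, ht⟩ := (tendsto_atTop.mp (lam_tendsto hf) e).exists
  obtain ⟨u, hu1, hu2⟩ := ((tendsto_atTop.mp (lam_tendsto hf) e).and (eventually_gt_atTop 0)).exists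
  exact ⟨u, hu2, hu1⟩

theorem ginv_S_bddBelow (f : ℝ → ℝ) (e : ℝ) : BddBelow {t | 0 < t ∧ e ≤ lam f t} :=
  ⟨0, fun t ht => ht.1.le⟩

theorem ginv_mem (hf : Nice f) {e : ℝ} (he : 0 < e) :
    0 < ginv f e ∧ e ≤ lam f (ginv f e) := by
  have hcl : IsClosed {t | 0 < t ∧ e ≤ lam f t} := by
    rw [ginv_setOf hf he]
    exact isClosed_le continuous_const (lam_cont hf)
  have := hcl.csInf_mem (ginv_S_nonempty hf e) (ginv_S_bddBelow f e)
  exact this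

theorem ginv_pos (hf : Nice f) {e : ℝ} (he : 0 < e) : 0 < ginv f e := (ginv_mem hf he).1

theorem ginv_le_iff (hf : Nice f) {e : ℝ} (he : 0 < e) (r : ℝ) :
    ginv f e ≤ r ↔ e ≤ lam f r := by
  constructor
  · intro h
    exact le_trans (ginv_mem hf he).2 (lam_mono hf h)
  · intro h
    apply csInf_le (ginv_S_bddBelow f e)
    refine ⟨?_, h⟩
    by_contra hr
    push_neg at hr
    rw [lam_nonpos hf hr] at h
    exact absurd (he.trans_le h) (lt_irrefl 0)

theorem lt_ginv_iff (hf : Nice f) {e : ℝ} (he : 0 < e) (r : ℝ) :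
    r < ginv f e ↔ lam f r < e := by
  rw [← not_le, ← not_le, ginv_le_iff hf he]

theorem ginv_mono (hf : Nice f) : Monotone (ginv f) := by
  intro a b hab
  apply csInf_le_csInf (ginv_S_bddBelow f a) (ginv_S_nonempty hf b)
  exact fun t ht => ⟨ht.1, hab.trans ht.2⟩

theorem ginv_meas (hf : Nice f) : Measurable (ginv f) := (ginv_mono hf).measurable

theorem lam_ginv (hf : Nice f) {e : ℝ} (he : 0 < e) : lam f (ginv f e) = e := by
  refine le_antisymm ?_ (ginv_mem hf he).2
  have hg := ginv_pos hf he
  have hten : Tendsto (lam f) (nhdsWithin (ginv f e) (Set.Iio (ginv f e)))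
      (nhds (lam f (ginv f e))) :=
    ((lam_cont hf).continuousAt).continuousWithinAt.tendsto
  refine le_of_tendsto hten ?_
  filter_upwards [self_mem_nhdsWithin] with r hr
  exact ((lt_ginv_iff hf he r).mp hr).le


noncomputable def expM : Measure ℝ :=
  (volume.restrict (Set.Ioi (0:ℝ))).withDensity fun u => ENNReal.ofReal (Real.exp (-u))

theorem expM_apply {s : Set ℝ} (hs : MeasurableSet s) :
    expM s = ∫⁻ u in s ∩ Set.Ioi 0, ENNReal.ofReal (Real.exp (-u)) := by
  rw [expM, withDensity_apply _ hs, Measure.restrict_restrict hs]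

theorem expNegIntegrableOn (a : ℝ) :
    IntegrableOn (fun u : ℝ => Real.exp (-u)) (Set.Ioi a) := by
  have h := exp_neg_integrableOn_Ioi a one_pos
  have heq : Set.EqOn (fun x : ℝ => Real.exp (-1*x)) (fun u : ℝ => Real.exp (-u))
      (Set.Ioi a) := fun x _ => by norm_num
  exact IntegrableOn.congr_fun h heq measurableSet_Ioi

theorem integral_exp_neg_Ioc {b : ℝ} (hb : 0 ≤ b) :
    ∫ u in Set.Ioc (0:ℝ) b, Real.exp (-u) = 1 - Real.exp (-b) := by
  rw [← intervalIntegral.integral_of_le hb]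
  have : ∀ u ∈ Set.uIcc (0:ℝ) b, HasDerivAt (fun x => -Real.exp (-x)) (Real.exp (-u)) u := by
    intro u _
    have h1 : HasDerivAt (fun x : ℝ => -x) (-1) u := (hasDerivAt_id u).neg
    have h2 := (Real.hasDerivAt_exp (-u)).comp u h1
    have h3 : HasDerivAt (fun x => -Real.exp (-x)) (-(Real.exp (-u) * -1)) u := h2.neg
    convert h3 using 1
    ring
  rw [intervalIntegral.integral_eq_sub_of_hasDerivAt this
    ((Real.continuous_exp.comp continuous_neg).intervalIntegrable 0 b)]
  simp only [neg_zero, Real.exp_zero]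
  ring

theorem lintegral_exp_neg_Ioc (b : ℝ) :
    ∫⁻ u in Set.Ioc (0:ℝ) b, ENNReal.ofReal (Real.exp (-u)) = ENNReal.ofReal (1 - Real.exp (-b)) := by
  rcases le_or_gt b 0 with h | h
  · rw [Set.Ioc_eq_empty (by exact fun hh => absurd (hh.trans_le h) (lt_irrefl 0)),
      Measure.restrict_empty, lintegral_zero_measure]
    have : 1 - Real.exp (-b) ≤ 0 := by
      have : (1:ℝ) ≤ Real.exp (-b) := by
        rw [← Real.exp_zero]
        exact Real.exp_le_exp.mpr (by linarith)
      linarith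
    rw [ENNReal.ofReal_eq_zero.mpr this]
  · rw [← ofReal_integral_eq_lintegral_ofReal
      ((expNegIntegrableOn 0).mono_set Set.Ioc_subset_Ioi_self)
      (Eventually.of_forall fun x => (Real.exp_pos _).le),
      integral_exp_neg_Ioc h.le]

theorem expM_Ioc (b : ℝ) : expM (Set.Ioc 0 b) = ENNReal.ofReal (1 - Real.exp (-b)) := by
  rw [expM_apply measurableSet_Ioc]
  rw [Set.Ioc_inter_Ioi, sup_of_le_left le_rfl]
  exact lintegral_exp_neg_Ioc b

theorem lintegral_exp_neg_Ioi (c : ℝ) :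
    ∫⁻ u in Set.Ioi c, ENNReal.ofReal (Real.exp (-u)) = ENNReal.ofReal (Real.exp (-c)) := by
  rw [← ofReal_integral_eq_lintegral_ofReal (expNegIntegrableOn c)
      (Eventually.of_forall fun x => (Real.exp_pos _).le), integral_exp_neg_Ioi c]

instance : IsProbabilityMeasure expM := by
  constructor
  have : expM Set.univ = ∫⁻ u in Set.Ioi (0:ℝ), ENNReal.ofReal (Real.exp (-u)) := by
    rw [expM_apply MeasurableSet.univ, Set.univ_inter]
  rw [this, lintegral_exp_neg_Ioi 0]
  simp [Real.exp_zero]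


theorem map_E_eq_expM {Ω' : Type*} [MeasurableSpace Ω'] (Phat : Measure Ω')
    [IsProbabilityMeasure Phat] (E : Ω' → ℝ) (hE : Measurable E)
    (hEexp : ∀ x : ℝ, 0 ≤ x → Phat {ω | x < E ω} = ENNReal.ofReal (Real.exp (-x))) :
    Phat.map E = expM := by
  have hmap : IsProbabilityMeasure (Phat.map E) := Measure.isProbabilityMeasure_map hE.aemeasurable
  apply Measure.ext_of_Iic
  intro a
  rw [Measure.map_apply hE measurableSet_Iic]
  have hIic : E ⁻¹' Set.Iic a = {ω | a < E ω}ᶜ := by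
    ext ω; simp [Set.mem_Iic, not_lt]
  have hs : MeasurableSet {ω | a < E ω} := measurableSet_lt measurable_const hE
  have hcompl : Phat (E ⁻¹' Set.Iic a) = 1 - Phat {ω | a < E ω} := by
    rw [hIic, measure_compl hs (measure_ne_top _ _), measure_univ]
  rcases le_or_gt 0 a with h | h
  · rw [hcompl, hEexp a h]
    have : expM (Set.Iic a) = expM (Set.Ioc 0 a) := by
      rw [expM_apply measurableSet_Iic, expM_apply measurableSet_Ioc]
      congr 1
      rw [Set.Iic_inter_Ioi, Set.Ioc_inter_Ioi, sup_idem]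
    rw [this, expM_Ioc]
    rw [ENNReal.ofReal_sub _ (Real.exp_pos _).le]
    simp
  · have h1 : Phat {ω | a < E ω} = 1 := by
      refine le_antisymm prob_le_one ?_
      have : Phat {ω | (0:ℝ) < E ω} ≤ Phat {ω | a < E ω} :=
        measure_mono fun ω hω => h.trans hω
      rw [hEexp 0 le_rfl] at this
      simpa using this
    rw [hcompl, h1]
    have : expM (Set.Iic a) = 0 := by
      rw [expM_apply measurableSet_Iic]
      have : Set.Iic a ∩ Set.Ioi (0:ℝ) = ∅ := by
        ext x; simp only [Set.mem_inter_iff, Set.mem_Iic, Set.mem_Ioi, Set.mem_empty_iff_false,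
          iff_false, not_and, not_lt]
        intro hx; linarith
      rw [this]; simp
    rw [this]; simp


theorem lemC_inner (hf : Nice f) (a u : ℝ) :
    ∫⁻ y in Set.Ioc (0:ℝ) a,
        Set.indicator {y | lam f y < u} (fun y => ENNReal.ofReal (f y)) y
      = ENNReal.ofReal (min u (lam f a)) := by
  have hTmeas : MeasurableSet {y | lam f y < u} :=
    measurableSet_lt (lam_cont hf).measurable measurable_const
  rcases le_or_gt u 0 with hu | hu
  · have hzero : ∀ y ∈ Set.Ioc (0:ℝ) a,
        Set.indicator {y | lam f y < u} (fun y => ENNReal.ofReal (f y)) y = 0 := by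
      intro y _
      apply Set.indicator_of_notMem
      simp only [Set.mem_setOf_eq, not_lt]
      exact hu.trans (lam_nonneg hf y)
    rw [setLIntegral_congr_fun measurableSet_Ioc hzero, lintegral_zero,
      min_eq_left (hu.trans (lam_nonneg hf a)), ENNReal.ofReal_eq_zero.mpr hu]
  · rcases lt_or_ge (lam f a) u with hau | hau
    · have heq : ∀ y ∈ Set.Ioc (0:ℝ) a,
          Set.indicator {y | lam f y < u} (fun y => ENNReal.ofReal (f y)) y
            = ENNReal.ofReal (f y) := by
        intro y hy
        apply Set.indicator_of_mem
        exact lt_of_le_of_lt (lam_mono hf hy.2) hau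
      rw [setLIntegral_congr_fun measurableSet_Ioc heq,
        lintegral_Ioc_ofReal hf, min_eq_right hau.le]
    · set c := ginv f u with hc
      have hc0 : 0 < c := ginv_pos hf hu
      have hca : c ≤ a := (ginv_le_iff hf hu a).mpr hau
      have hlamc : lam f c = u := lam_ginv hf hu
      have hset : {y | lam f y < u} = Set.Iio c := by
        ext y
        simp only [Set.mem_setOf_eq, Set.mem_Iio]
        rw [← lt_ginv_iff hf hu y]
      rw [hset]
      rw [lintegral_indicator measurableSet_Iio, Measure.restrict_restrict measurableSet_Iio]
      have hset2 : Set.Iio c ∩ Set.Ioc 0 a = Set.Ioo 0 c := by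
        ext y
        simp only [Set.mem_inter_iff, Set.mem_Iio, Set.mem_Ioc, Set.mem_Ioo]
        constructor
        · rintro ⟨h1, h2, h3⟩; exact ⟨h2, h1⟩
        · rintro ⟨h1, h2⟩; exact ⟨h2, h1, (h2.le.trans hca)⟩
      rw [hset2, setLIntegral_congr Ioo_ae_eq_Ioc, lintegral_Ioc_ofReal hf, hlamc,
        min_eq_left (hlamc ▸ lam_mono hf hca : u ≤ lam f a)]


theorem integral_exp_mul_min {c : ℝ} (hc : 0 ≤ c) :
    ∫ u in Set.Ioi (0:ℝ), Real.exp (-u) * min u c = 1 - Real.exp (-c) := by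
  have hcont : Continuous fun u : ℝ => Real.exp (-u) * min u c :=
    (Real.continuous_exp.comp continuous_neg).mul (continuous_id.min continuous_const)
  have hint1 : IntegrableOn (fun u : ℝ => Real.exp (-u) * min u c) (Set.Ioc 0 c) :=
    hcont.integrableOn_Ioc
  have hexpint : IntegrableOn (fun u : ℝ => Real.exp (-u)) (Set.Ioi c) :=
    expNegIntegrableOn c
  have hint2 : IntegrableOn (fun u : ℝ => Real.exp (-u) * min u c) (Set.Ioi c) := by
    have heq : Set.EqOn (fun u : ℝ => Real.exp (-u) * c)
        (fun u : ℝ => Real.exp (-u) * min u c) (Set.Ioi c) := by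
      intro x hx
      simp only [min_eq_right (le_of_lt (Set.mem_Ioi.mp hx))]
    exact IntegrableOn.congr_fun (hexpint.mul_const c) heq measurableSet_Ioi
  have hsplit : Set.Ioc (0:ℝ) c ∪ Set.Ioi c = Set.Ioi 0 := Set.Ioc_union_Ioi_eq_Ioi hc
  rw [← hsplit, setIntegral_union (Set.Ioc_disjoint_Ioi le_rfl) measurableSet_Ioi hint1 hint2]
  have hI1 : ∫ u in Set.Ioc (0:ℝ) c, Real.exp (-u) * min u c
      = 1 - (c+1) * Real.exp (-c) := by
    have hcongr : ∀ u ∈ Set.Ioc (0:ℝ) c, Real.exp (-u) * min u c = u * Real.exp (-u) := by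
      intro u hu
      rw [min_eq_left hu.2, mul_comm]
    rw [setIntegral_congr_fun measurableSet_Ioc hcongr, ← intervalIntegral.integral_of_le hc]
    have hderiv : ∀ u ∈ Set.uIcc (0:ℝ) c,
        HasDerivAt (fun x : ℝ => -((x+1) * Real.exp (-x))) (u * Real.exp (-u)) u := by
      intro u _
      have h1 : HasDerivAt (fun x : ℝ => x + 1) 1 u := (hasDerivAt_id u).add_const 1
      have h2 : HasDerivAt (fun x : ℝ => Real.exp (-x)) (-Real.exp (-u)) u := by
        have : HasDerivAt (fun x : ℝ => Real.exp (-x)) (Real.exp (-u) * -1) u :=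
          (Real.hasDerivAt_exp (-u)).comp u ((hasDerivAt_id u).neg)
        simpa using this
      have h3 : HasDerivAt (fun x : ℝ => -((x+1) * Real.exp (-x)))
          (-(1 * Real.exp (-u) + (u + 1) * -Real.exp (-u))) u := (h1.mul h2).neg
      convert h3 using 1
      ring
    rw [intervalIntegral.integral_eq_sub_of_hasDerivAt hderiv
      ((continuous_id.mul (Real.continuous_exp.comp continuous_neg)).intervalIntegrable 0 c)]
    simp only [neg_zero, Real.exp_zero]
    ring
  have hI2 : ∫ u in Set.Ioi c, Real.exp (-u) * min u c = c * Real.exp (-c) := by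
    have hcongr : ∀ u ∈ Set.Ioi c, Real.exp (-u) * min u c = Real.exp (-u) * c := by
      intro u hu
      rw [min_eq_right (le_of_lt (Set.mem_Ioi.mp hu))]
    rw [setIntegral_congr_fun measurableSet_Ioi hcongr, integral_mul_const,
      integral_exp_neg_Ioi, mul_comm]
  rw [hI1, hI2]
  ring

theorem lintegral_exp_mul_min {c : ℝ} (hc : 0 ≤ c) :
    ∫⁻ u, ENNReal.ofReal (Real.exp (-u)) * ENNReal.ofReal (min u c)
      = ENNReal.ofReal (1 - Real.exp (-c)) := by
  have hsplit := lintegral_add_compl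
    (fun u => ENNReal.ofReal (Real.exp (-u)) * ENNReal.ofReal (min u c))
    (measurableSet_Iic (a := (0:ℝ))) (μ := volume)
  have hIic : ∫⁻ u in Set.Iic (0:ℝ),
      ENNReal.ofReal (Real.exp (-u)) * ENNReal.ofReal (min u c) = 0 := by
    have : ∀ u ∈ Set.Iic (0:ℝ),
        ENNReal.ofReal (Real.exp (-u)) * ENNReal.ofReal (min u c) = 0 := by
      intro u hu
      rw [ENNReal.ofReal_eq_zero.mpr (le_trans (min_le_left u c) hu), mul_zero]
    rw [setLIntegral_congr_fun measurableSet_Iic this, lintegral_zero]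
  have hcompl : (Set.Iic (0:ℝ))ᶜ = Set.Ioi 0 := Set.compl_Iic
  rw [← hsplit, hIic, zero_add, hcompl]
  have hmeq : ∀ᵐ u ∂(volume.restrict (Set.Ioi (0:ℝ))),
      ENNReal.ofReal (Real.exp (-u)) * ENNReal.ofReal (min u c)
        = ENNReal.ofReal (Real.exp (-u) * min u c) := by
    filter_upwards with u
    rw [ENNReal.ofReal_mul (Real.exp_pos _).le]
  rw [lintegral_congr_ae hmeq]
  have hintOn : IntegrableOn (fun u : ℝ => Real.exp (-u) * min u c) (Set.Ioi 0) := by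
    have hexpint : IntegrableOn (fun u : ℝ => c * Real.exp (-u)) (Set.Ioi 0) :=
      (expNegIntegrableOn 0).const_mul c
    refine Integrable.mono' hexpint
      ((Real.continuous_exp.comp continuous_neg).mul
        (continuous_id.min continuous_const)).aestronglyMeasurable ?_
    filter_upwards [ae_restrict_mem measurableSet_Ioi] with u hu
    have h1 : 0 ≤ min u c := le_min (le_of_lt hu) hc
    rw [Real.norm_eq_abs, abs_of_nonneg (mul_nonneg (Real.exp_pos _).le h1)]
    calc Real.exp (-u) * min u c ≤ Real.exp (-u) * c := by
          exact mul_le_mul_of_nonneg_left (min_le_right u c) (Real.exp_pos _).le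
      _ = c * Real.exp (-u) := mul_comm _ _
  rw [← ofReal_integral_eq_lintegral_ofReal hintOn ?_, integral_exp_mul_min hc]
  filter_upwards [ae_restrict_mem measurableSet_Ioi] with u hu
  exact mul_nonneg (Real.exp_pos _).le (le_min (le_of_lt hu) hc)


theorem lemC (hf : Nice f) (a : ℝ) :
    ∫⁻ y in Set.Ioc (0:ℝ) a, ENNReal.ofReal (f y * Real.exp (-(lam f y)))
      = ENNReal.ofReal (1 - Real.exp (-(lam f a))) := by
  have hexpm : Measurable fun u : ℝ => ENNReal.ofReal (Real.exp (-u)) := by fun_prop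
  have hfm : Measurable fun y : ℝ => ENNReal.ofReal (f y) := hf.meas.ennreal_ofReal
  have hTmeas : ∀ u : ℝ, MeasurableSet {y | lam f y < u} := fun u =>
    measurableSet_lt (lam_cont hf).measurable measurable_const
  set G : ℝ × ℝ → ℝ≥0∞ := fun p =>
    Set.indicator {q : ℝ × ℝ | lam f q.1 < q.2}
      (fun q => ENNReal.ofReal (Real.exp (-q.2)) * ENNReal.ofReal (f q.1)) p with hG
  have hGmeas : Measurable G := by
    apply Measurable.indicator
    · exact (ENNReal.measurable_ofReal.comp
        ((Real.measurable_exp).comp measurable_snd.neg)).mul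
        (ENNReal.measurable_ofReal.comp (hf.meas.comp measurable_fst))
    · exact measurableSet_lt ((lam_cont hf).measurable.comp measurable_fst) measurable_snd
  have hslice : ∀ y : ℝ, (fun u => G (y, u))
      = Set.indicator (Set.Ioi (lam f y))
          (fun u => ENNReal.ofReal (Real.exp (-u)) * ENNReal.ofReal (f y)) := by
    intro y
    funext u
    rw [hG]
    simp only [Set.indicator_apply, Set.mem_setOf_eq, Set.mem_Ioi]
  have key : ∀ y : ℝ, ∫⁻ u, G (y, u)
      = ENNReal.ofReal (f y * Real.exp (-(lam f y))) := by
    intro y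
    rw [hslice y, lintegral_indicator measurableSet_Ioi,
      lintegral_mul_const _ hexpm,
      lintegral_exp_neg_Ioi, ← ENNReal.ofReal_mul (Real.exp_pos _).le, mul_comm]
  have hslice2 : ∀ u : ℝ, (fun y => G (y, u))
      = Set.indicator {y | lam f y < u}
          (fun y => ENNReal.ofReal (Real.exp (-u)) * ENNReal.ofReal (f y)) := by
    intro u
    funext y
    rw [hG]
    simp only [Set.indicator_apply, Set.mem_setOf_eq]
  have inner2 : ∀ u : ℝ, ∫⁻ y in Set.Ioc (0:ℝ) a, G (y, u)
      = ENNReal.ofReal (Real.exp (-u)) * ENNReal.ofReal (min u (lam f a)) := by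
    intro u
    have e1 : ∫⁻ y in Set.Ioc (0:ℝ) a, G (y, u)
        = ∫⁻ y in {y | lam f y < u} ∩ Set.Ioc (0:ℝ) a,
            ENNReal.ofReal (Real.exp (-u)) * ENNReal.ofReal (f y) := by
      rw [hslice2 u, lintegral_indicator (hTmeas u),
        Measure.restrict_restrict (hTmeas u)]
    have e2 : ∫⁻ y in {y | lam f y < u} ∩ Set.Ioc (0:ℝ) a, ENNReal.ofReal (f y)
        = ENNReal.ofReal (min u (lam f a)) := by
      rw [← lemC_inner hf a u, lintegral_indicator (hTmeas u),
        Measure.restrict_restrict (hTmeas u)]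
    rw [e1, lintegral_const_mul _ hfm, e2]
  calc ∫⁻ y in Set.Ioc (0:ℝ) a, ENNReal.ofReal (f y * Real.exp (-(lam f y)))
      = ∫⁻ y in Set.Ioc (0:ℝ) a, ∫⁻ u, G (y, u) := by
        apply lintegral_congr
        intro y
        rw [key y]
    _ = ∫⁻ u, ∫⁻ y in Set.Ioc (0:ℝ) a, G (y, u) := by
        apply lintegral_lintegral_swap
        exact hGmeas.aemeasurable
    _ = ∫⁻ u, ENNReal.ofReal (Real.exp (-u)) * ENNReal.ofReal (min u (lam f a)) := by
        apply lintegral_congr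
        intro u
        rw [inner2 u]
    _ = ENNReal.ofReal (1 - Real.exp (-(lam f a))) := lintegral_exp_mul_min (lam_nonneg hf a)


noncomputable def dens (f : ℝ → ℝ) : Measure ℝ :=
  (volume.restrict (Set.Ioi (0:ℝ))).withDensity
    fun y => ENNReal.ofReal (f y * Real.exp (-(lam f y)))

theorem dens_meas (hf : Nice f) :
    Measurable fun y : ℝ => ENNReal.ofReal (f y * Real.exp (-(lam f y))) :=
  (hf.meas.mul ((Real.continuous_exp.comp (lam_cont hf).neg).measurable)).ennreal_ofReal

theorem dens_apply (hf : Nice f) {s : Set ℝ} (hs : MeasurableSet s) :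
    dens f s = ∫⁻ y in s ∩ Set.Ioi 0, ENNReal.ofReal (f y * Real.exp (-(lam f y))) := by
  rw [dens, withDensity_apply _ hs, Measure.restrict_restrict hs]

theorem dens_Iic (hf : Nice f) (a : ℝ) :
    dens f (Set.Iic a) = ENNReal.ofReal (1 - Real.exp (-(lam f a))) := by
  rw [dens_apply hf measurableSet_Iic, Set.Iic_inter_Ioi, lemC hf a]

theorem dens_fin (hf : Nice f) : IsFiniteMeasure (dens f) := by
  constructor
  have huniv : dens f Set.univ = dens f (Set.Ioi 0) := by
    rw [dens_apply hf MeasurableSet.univ, dens_apply hf measurableSet_Ioi,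
      Set.univ_inter, Set.inter_self]
  have hU : Set.Ioi (0:ℝ) = ⋃ n : ℕ, Set.Iic (n:ℝ) ∩ Set.Ioi 0 := by
    ext x
    simp only [Set.mem_Ioi, Set.mem_iUnion, Set.mem_inter_iff, Set.mem_Iic]
    constructor
    · intro hx
      obtain ⟨n, hn⟩ := exists_nat_ge x
      exact ⟨n, hn, hx⟩
    · rintro ⟨n, -, hx⟩; exact hx
  have hmono : Monotone fun n : ℕ => Set.Iic (n:ℝ) ∩ Set.Ioi 0 := by
    intro m n hmn
    exact Set.inter_subset_inter_left _ (Set.Iic_subset_Iic.mpr (by exact_mod_cast hmn))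
  have hixx : ∀ n : ℕ, dens f (Set.Iic (n:ℝ) ∩ Set.Ioi 0) ≤ 1 := by
    intro n
    calc dens f (Set.Iic (n:ℝ) ∩ Set.Ioi 0) ≤ dens f (Set.Iic (n:ℝ)) :=
          measure_mono Set.inter_subset_left
      _ = ENNReal.ofReal (1 - Real.exp (-(lam f n))) := dens_Iic hf n
      _ ≤ ENNReal.ofReal 1 := ENNReal.ofReal_le_ofReal (by
          have := (Real.exp_pos (-(lam f n))).le
          linarith)
      _ = 1 := ENNReal.ofReal_one
  rw [huniv, hU, hmono.measure_iUnion]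
  calc (⨆ n : ℕ, dens f (Set.Iic (n:ℝ) ∩ Set.Ioi 0)) ≤ 1 := iSup_le hixx
    _ < ⊤ := ENNReal.one_lt_top

theorem mapD (hf : Nice f) : expM.map (ginv f) = dens f := by
  have h1 : IsFiniteMeasure (dens f) := dens_fin hf
  have h2 : IsProbabilityMeasure (expM.map (ginv f)) :=
    Measure.isProbabilityMeasure_map (ginv_meas hf).aemeasurable
  apply Measure.ext_of_Iic
  intro a
  rw [Measure.map_apply (ginv_meas hf) measurableSet_Iic,
    expM_apply ((ginv_meas hf) measurableSet_Iic), dens_Iic hf a]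
  have hset : ginv f ⁻¹' Set.Iic a ∩ Set.Ioi 0 = Set.Ioc 0 (lam f a) := by
    ext u
    simp only [Set.mem_inter_iff, Set.mem_preimage, Set.mem_Iic, Set.mem_Ioi, Set.mem_Ioc]
    constructor
    · rintro ⟨h1, h2⟩
      exact ⟨h2, (ginv_le_iff hf h2 a).mp h1⟩
    · rintro ⟨h1, h2⟩
      exact ⟨(ginv_le_iff hf h1 a).mpr h2, h1⟩
  rw [hset, lintegral_exp_neg_Ioc]

theorem change_of_var (hf : Nice f) {H : ℝ → ℝ≥0∞} (hH : Measurable H) :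
    ∫⁻ u, H (ginv f u) ∂expM
      = ∫⁻ y in Set.Ioi (0:ℝ),
          ENNReal.ofReal (f y * Real.exp (-(lam f y))) * H y := by
  rw [← lintegral_map hH (ginv_meas hf), mapD hf, dens,
    lintegral_withDensity_eq_lintegral_mul _ (dens_meas hf) hH]
  rfl


theorem nice_indicator {f : ℝ → ℝ} (hm : Measurable f) (hnn : ∀ x, 0 ≤ x → 0 ≤ f x)
    (hfin : ∀ r : ℝ, ∫⁻ x in Set.Ioc (0:ℝ) r, ENNReal.ofReal (f x) < ⊤)
    (hinf : ∫⁻ x in Set.Ioi (0:ℝ), ENNReal.ofReal (f x) = ⊤) :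
    Nice (Set.indicator (Set.Ioi 0) f) := by
  have hcong : ∀ (S : Set ℝ), MeasurableSet S → S ⊆ Set.Ioi 0 →
      ∫⁻ x in S, ENNReal.ofReal (Set.indicator (Set.Ioi 0) f x)
        = ∫⁻ x in S, ENNReal.ofReal (f x) := by
    intro S hS hsub
    apply setLIntegral_congr_fun hS
    exact fun x hx => by rw [Set.indicator_of_mem (hsub hx)]
  constructor
  · exact hm.indicator measurableSet_Ioi
  · intro x
    by_cases hx : x ∈ Set.Ioi (0:ℝ)
    · rw [Set.indicator_of_mem hx]; exact hnn x (le_of_lt hx)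
    · rw [Set.indicator_of_notMem hx]
  · intro x hx
    exact Set.indicator_of_notMem (by simpa using not_lt.mpr hx) f
  · intro r
    rw [hcong _ measurableSet_Ioc Set.Ioc_subset_Ioi_self]
    exact hfin r
  · rw [hcong _ measurableSet_Ioi subset_rfl]
    exact hinf

theorem lam_indicator_eq {f : ℝ → ℝ} (r : ℝ) :
    lam (Set.indicator (Set.Ioi 0) f) r = ∫ x in Set.Ioc (0:ℝ) r, f x := by
  apply setIntegral_congr_fun measurableSet_Ioc
  intro x hx
  exact Set.indicator_of_mem (Set.mem_Ioi.mpr hx.1) f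

end Stmt18

open Stmt18

/-- expected recovery payment `Z` paid at the second default time `T₂`
when `T₂ ∈ (t, s]` and the first default occurs after `t`, with deterministic intensities.
`Ω'` plays the role of `Ω̂`, `Phat` of `P̂`. -/
theorem stmt_18
    {Ω' : Type*} [MeasurableSpace Ω'] (Phat : Measure Ω') [IsProbabilityMeasure Phat]
    (E₁ E₂ : Ω' → ℝ) (hE₁ : Measurable E₁) (hE₂ : Measurable E₂)
    (hEindep : IndepFun E₁ E₂ Phat)
    (hE₁exp : ∀ x : ℝ, 0 ≤ x → Phat {ω | x < E₁ ω} = ENNReal.ofReal (Real.exp (-x)))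
    (hE₂exp : ∀ x : ℝ, 0 ≤ x → Phat {ω | x < E₂ ω} = ENNReal.ofReal (Real.exp (-x)))
    (f₁ f₂ : ℝ → ℝ) (hf₁_meas : Measurable f₁) (hf₂_meas : Measurable f₂)
    (hf₁_nonneg : ∀ s : ℝ, 0 ≤ s → 0 ≤ f₁ s) (hf₂_nonneg : ∀ s : ℝ, 0 ≤ s → 0 ≤ f₂ s)
    (hf₁_fin : ∀ t : ℝ, ∫⁻ s in Set.Ioc (0:ℝ) t, ENNReal.ofReal (f₁ s) < ⊤)
    (hf₂_fin : ∀ t : ℝ, ∫⁻ s in Set.Ioc (0:ℝ) t, ENNReal.ofReal (f₂ s) < ⊤)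
    (hf₁_inf : ∫⁻ s in Set.Ioi (0:ℝ), ENNReal.ofReal (f₁ s) = ⊤)
    (hf₂_inf : ∫⁻ s in Set.Ioi (0:ℝ), ENNReal.ofReal (f₂ s) = ⊤)
    (Λ₁ Λ₂ : ℝ → ℝ)
    (hΛ₁ : ∀ t : ℝ, Λ₁ t = ∫ s in Set.Ioc (0:ℝ) t, f₁ s)
    (hΛ₂ : ∀ t : ℝ, Λ₂ t = ∫ s in Set.Ioc (0:ℝ) t, f₂ s)
    (T₁ T₂ : Ω' → ℝ)
    (hT₁ : ∀ ω, T₁ ω = sInf {t : ℝ | 0 < t ∧ E₁ ω ≤ Λ₁ t})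
    (hT₂ : ∀ ω, T₂ ω = T₁ ω + sInf {t : ℝ | 0 < t ∧ E₂ ω ≤ Λ₂ t})
    (Z : ℝ → ℝ) (hZ_meas : Measurable Z) (hZ_nonneg : ∀ x, 0 ≤ Z x)
    (hZ_bdd : ∃ C : ℝ, ∀ x, Z x ≤ C) :
    ∀ t s : ℝ, 0 ≤ t → t ≤ s →
      ∫⁻ ω in {ω | t < T₁ ω ∧ T₂ ω ≤ s}, ENNReal.ofReal (Z (T₂ ω)) ∂Phat
        = ENNReal.ofReal
            (∫ y in Set.Ioc t s,
              (∫ x in Set.Ioc (0:ℝ) (s - y), Z (y + x) * Real.exp (-Λ₂ x) * f₂ x)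
                * Real.exp (-Λ₁ y) * f₁ y) := by
  intro t s ht0 hts
  obtain ⟨C, hC⟩ := hZ_bdd
  have hC0 : 0 ≤ C := le_trans (hZ_nonneg 0) (hC 0)
  set F₁ : ℝ → ℝ := Set.indicator (Set.Ioi 0) f₁ with hF₁def
  set F₂ : ℝ → ℝ := Set.indicator (Set.Ioi 0) f₂ with hF₂def
  have hN₁ : Nice F₁ := nice_indicator hf₁_meas hf₁_nonneg hf₁_fin hf₁_inf
  have hN₂ : Nice F₂ := nice_indicator hf₂_meas hf₂_nonneg hf₂_fin hf₂_inf
  have hlam₁ : ∀ r, lam F₁ r = Λ₁ r := fun r => by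
    rw [lam_indicator_eq, hΛ₁ r]
  have hlam₂ : ∀ r, lam F₂ r = Λ₂ r := fun r => by
    rw [lam_indicator_eq, hΛ₂ r]
  have hT1g : ∀ ω, T₁ ω = ginv F₁ (E₁ ω) := by
    intro ω
    rw [hT₁ ω, ginv]
    congr 1
    ext r
    simp only [Set.mem_setOf_eq, hlam₁ r]
  have hT2g : ∀ ω, T₂ ω = ginv F₁ (E₁ ω) + ginv F₂ (E₂ ω) := by
    intro ω
    rw [hT₂ ω, hT1g ω, ginv]
    congr 2
    ext r
    simp only [Set.mem_setOf_eq, hlam₂ r]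
  -- the kernel function
  set KK : ℝ × ℝ → ℝ≥0∞ := fun q =>
    Set.indicator {q : ℝ × ℝ | t < q.1 ∧ q.1 + q.2 ≤ s}
      (fun q => ENNReal.ofReal (Z (q.1 + q.2))) q with hKKdef
  have hKKmeas : Measurable KK := by
    apply Measurable.indicator
    · exact (hZ_meas.comp (measurable_fst.add measurable_snd)).ennreal_ofReal
    · exact (measurableSet_lt measurable_const measurable_fst).inter
        (measurableSet_le (measurable_fst.add measurable_snd) measurable_const)
  have hSmeas : MeasurableSet {ω | t < T₁ ω ∧ T₂ ω ≤ s} := by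
    have hTm1 : Measurable T₁ := by
      have : T₁ = fun ω => ginv F₁ (E₁ ω) := funext hT1g
      rw [this]; exact (ginv_meas hN₁).comp hE₁
    have hTm2 : Measurable T₂ := by
      have : T₂ = fun ω => ginv F₁ (E₁ ω) + ginv F₂ (E₂ ω) := funext hT2g
      rw [this]; exact ((ginv_meas hN₁).comp hE₁).add ((ginv_meas hN₂).comp hE₂)
    exact (measurableSet_lt measurable_const hTm1).inter
      (measurableSet_le hTm2 measurable_const)
  -- step 1 : rewrite as integral of KK over the joint law
  have step1 : ∫⁻ ω in {ω | t < T₁ ω ∧ T₂ ω ≤ s}, ENNReal.ofReal (Z (T₂ ω)) ∂Phat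
      = ∫⁻ ω, KK (ginv F₁ (E₁ ω), ginv F₂ (E₂ ω)) ∂Phat := by
    rw [← lintegral_indicator hSmeas]
    apply lintegral_congr
    intro ω
    simp only [hKKdef, Set.indicator_apply, Set.mem_setOf_eq, hT1g, hT2g]
  -- step 2 : joint law is a product of exponential laws
  have hmapprod : Phat.map (fun ω => (E₁ ω, E₂ ω)) = expM.prod expM := by
    rw [(indepFun_iff_map_prod_eq_prod_map_map hE₁.aemeasurable hE₂.aemeasurable).mp hEindep,
      map_E_eq_expM Phat E₁ hE₁ hE₁exp, map_E_eq_expM Phat E₂ hE₂ hE₂exp]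
  have hΦmeas : Measurable fun p : ℝ × ℝ => KK (ginv F₁ p.1, ginv F₂ p.2) :=
    hKKmeas.comp (((ginv_meas hN₁).comp measurable_fst).prodMk
      ((ginv_meas hN₂).comp measurable_snd))
  have step2 : ∫⁻ ω, KK (ginv F₁ (E₁ ω), ginv F₂ (E₂ ω)) ∂Phat
      = ∫⁻ u, ∫⁻ v, KK (ginv F₁ u, ginv F₂ v) ∂expM ∂expM := by
    have h1 : ∫⁻ ω, KK (ginv F₁ (E₁ ω), ginv F₂ (E₂ ω)) ∂Phat
        = ∫⁻ p, KK (ginv F₁ p.1, ginv F₂ p.2) ∂(Phat.map fun ω => (E₁ ω, E₂ ω)) := by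
      rw [lintegral_map hΦmeas (hE₁.prodMk hE₂)]
    rw [h1, hmapprod, lintegral_prod _ hΦmeas.aemeasurable]
  -- step 3 : inner change of variables
  set H1 : ℝ → ℝ≥0∞ := fun y =>
    ∫⁻ x in Set.Ioi (0:ℝ), ENNReal.ofReal (F₂ x * Real.exp (-(lam F₂ x))) * KK (y, x)
    with hH1def
  have hH1meas : Measurable H1 := by
    apply Measurable.lintegral_prod_right'
      (f := fun p : ℝ × ℝ => ENNReal.ofReal (F₂ p.2 * Real.exp (-(lam F₂ p.2))) * KK p)
    exact ((dens_meas hN₂).comp measurable_snd).mul hKKmeas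
  have step3 : ∀ u, ∫⁻ v, KK (ginv F₁ u, ginv F₂ v) ∂expM = H1 (ginv F₁ u) := by
    intro u
    exact change_of_var hN₂ (hKKmeas.comp (measurable_prodMk_left (x := ginv F₁ u)))
  have step4 : ∫⁻ u, H1 (ginv F₁ u) ∂expM
      = ∫⁻ y in Set.Ioi (0:ℝ), ENNReal.ofReal (F₁ y * Real.exp (-(lam F₁ y))) * H1 y :=
    change_of_var hN₁ hH1meas
  -- the real inner integral
  set J : ℝ → ℝ := fun y => ∫ x in Set.Ioc (0:ℝ) (s - y), Z (y + x) * Real.exp (-Λ₂ x) * f₂ x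
    with hJdef
  have hΛ₂meas : Measurable Λ₂ := by
    have : Λ₂ = lam F₂ := funext fun r => (hlam₂ r).symm
    rw [this]; exact (lam_cont hN₂).measurable
  have hΛ₁meas : Measurable Λ₁ := by
    have : Λ₁ = lam F₁ := funext fun r => (hlam₁ r).symm
    rw [this]; exact (lam_cont hN₁).measurable
  have hinner_meas : Measurable fun p : ℝ × ℝ => Z (p.1 + p.2) * Real.exp (-Λ₂ p.2) * f₂ p.2 :=
    ((hZ_meas.comp (measurable_fst.add measurable_snd)).mul
      (Real.measurable_exp.comp (hΛ₂meas.comp measurable_snd).neg)).mul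
      (hf₂_meas.comp measurable_snd)
  have hf₂int : ∀ r : ℝ, IntegrableOn f₂ (Set.Ioc 0 r) := by
    intro r
    refine IntegrableOn.congr_fun (hN₂.intOn r) ?_ measurableSet_Ioc
    intro x hx
    exact Set.indicator_of_mem (Set.mem_Ioi.mpr hx.1) f₂
  have hJint : ∀ y : ℝ, IntegrableOn (fun x => Z (y + x) * Real.exp (-Λ₂ x) * f₂ x)
      (Set.Ioc 0 (s - y)) := by
    intro y
    refine Integrable.mono' ((hf₂int (s - y)).const_mul C)
      (hinner_meas.comp (measurable_const.prodMk measurable_id)).aestronglyMeasurable ?_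
    filter_upwards [ae_restrict_mem measurableSet_Ioc] with x hx
    have hf2x : 0 ≤ f₂ x := hf₂_nonneg x hx.1.le
    have hexple : Real.exp (-Λ₂ x) ≤ 1 := by
      rw [← Real.exp_zero]
      apply Real.exp_le_exp.mpr
      have : 0 ≤ Λ₂ x := (hlam₂ x) ▸ lam_nonneg hN₂ x
      linarith
    have h1 : 0 ≤ Z (y + x) * Real.exp (-Λ₂ x) * f₂ x :=
      mul_nonneg (mul_nonneg (hZ_nonneg _) (Real.exp_pos _).le) hf2x
    rw [Real.norm_eq_abs, abs_of_nonneg h1]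
    calc Z (y + x) * Real.exp (-Λ₂ x) * f₂ x ≤ (C * 1) * f₂ x := by
          apply mul_le_mul_of_nonneg_right _ hf2x
          exact mul_le_mul (hC _) hexple (Real.exp_pos _).le hC0
      _ = C * f₂ x := by ring
  have hJnonneg : ∀ y, 0 ≤ J y := by
    intro y
    apply setIntegral_nonneg measurableSet_Ioc
    intro x hx
    exact mul_nonneg (mul_nonneg (hZ_nonneg _) (Real.exp_pos _).le) (hf₂_nonneg x hx.1.le)
  -- H1 equals ofReal ∘ J on (t, ∞)
  have hH1eq : ∀ y : ℝ, H1 y = if t < y then ENNReal.ofReal (J y) else 0 := by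
    intro y
    by_cases hty : t < y
    · rw [if_pos hty, hH1def]
      have e1 : ∀ x : ℝ, ENNReal.ofReal (F₂ x * Real.exp (-(lam F₂ x))) * KK (y, x)
          = Set.indicator {x : ℝ | y + x ≤ s}
              (fun x => ENNReal.ofReal (F₂ x * Real.exp (-(lam F₂ x)))
                * ENNReal.ofReal (Z (y + x))) x := by
        intro x
        simp only [hKKdef]
        simp only [Set.indicator_apply, Set.mem_setOf_eq, hty, true_and]
        split_ifs with h
        · rfl
        · rw [mul_zero]
      have e2 : {x : ℝ | y + x ≤ s} ∩ Set.Ioi 0 = Set.Ioc 0 (s - y) := by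
        ext x
        simp only [Set.mem_inter_iff, Set.mem_setOf_eq, Set.mem_Ioi, Set.mem_Ioc]
        constructor
        · rintro ⟨h1, h2⟩; exact ⟨h2, by linarith⟩
        · rintro ⟨h1, h2⟩; exact ⟨by linarith, h1⟩
      have hset : MeasurableSet {x : ℝ | y + x ≤ s} :=
        measurableSet_le (measurable_const.add measurable_id) measurable_const
      calc ∫⁻ x in Set.Ioi (0:ℝ), ENNReal.ofReal (F₂ x * Real.exp (-(lam F₂ x))) * KK (y, x)
          = ∫⁻ x in {x : ℝ | y + x ≤ s} ∩ Set.Ioi 0,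
              ENNReal.ofReal (F₂ x * Real.exp (-(lam F₂ x))) * ENNReal.ofReal (Z (y + x)) := by
            have A1 : ∫⁻ x in Set.Ioi (0:ℝ),
                ENNReal.ofReal (F₂ x * Real.exp (-(lam F₂ x))) * KK (y, x)
                = ∫⁻ x in Set.Ioi (0:ℝ), Set.indicator {x : ℝ | y + x ≤ s}
                    (fun x => ENNReal.ofReal (F₂ x * Real.exp (-(lam F₂ x)))
                      * ENNReal.ofReal (Z (y + x))) x :=
              lintegral_congr fun x => e1 x
            rw [A1, lintegral_indicator hset, Measure.restrict_restrict hset]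
        _ = ∫⁻ x in Set.Ioc (0:ℝ) (s - y),
              ENNReal.ofReal (Z (y + x) * Real.exp (-Λ₂ x) * f₂ x) := by
            rw [e2]
            apply setLIntegral_congr_fun measurableSet_Ioc
            intro x hx
            beta_reduce
            have hxpos : x ∈ Set.Ioi (0:ℝ) := Set.mem_Ioi.mpr hx.1
            rw [hF₂def, Set.indicator_of_mem hxpos, hlam₂ x,
              ← ENNReal.ofReal_mul (mul_nonneg (hf₂_nonneg x hx.1.le) (Real.exp_pos _).le)]
            congr 1
            ring
        _ = ENNReal.ofReal (J y) := by
            simp only [hJdef]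
            exact (ofReal_integral_eq_lintegral_ofReal (hJint y)
              (by
                filter_upwards [ae_restrict_mem measurableSet_Ioc] with x hx
                exact mul_nonneg (mul_nonneg (hZ_nonneg _) (Real.exp_pos _).le)
                  (hf₂_nonneg x hx.1.le))).symm
    · rw [if_neg hty]
      simp only [hH1def]
      have : ∀ x : ℝ, ENNReal.ofReal (F₂ x * Real.exp (-(lam F₂ x))) * KK (y, x) = 0 := by
        intro x
        have : (y, x) ∉ {q : ℝ × ℝ | t < q.1 ∧ q.1 + q.2 ≤ s} := fun h => hty h.1
        simp only [hKKdef, Set.indicator_of_notMem this, mul_zero]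
      rw [lintegral_congr fun x => this x, lintegral_zero]
  -- final calculus
  have hIoiInt : Set.Ioi t ∩ Set.Ioi (0:ℝ) = Set.Ioi t := by
    apply Set.inter_eq_self_of_subset_left
    exact Set.Ioi_subset_Ioi ht0
  have final : ∫⁻ y in Set.Ioi (0:ℝ), ENNReal.ofReal (F₁ y * Real.exp (-(lam F₁ y))) * H1 y
      = ENNReal.ofReal (∫ y in Set.Ioc t s, J y * Real.exp (-Λ₁ y) * f₁ y) := by
    have e1 : ∀ y : ℝ, ENNReal.ofReal (F₁ y * Real.exp (-(lam F₁ y))) * H1 y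
        = Set.indicator (Set.Ioi t)
            (fun y => ENNReal.ofReal (F₁ y * Real.exp (-(lam F₁ y))) * ENNReal.ofReal (J y))
            y := by
      intro y
      rw [hH1eq y]
      simp only [Set.indicator_apply, Set.mem_Ioi]
      split_ifs with h
      · rfl
      · rw [mul_zero]
    calc ∫⁻ y in Set.Ioi (0:ℝ), ENNReal.ofReal (F₁ y * Real.exp (-(lam F₁ y))) * H1 y
        = ∫⁻ y in Set.Ioi t,
            ENNReal.ofReal (F₁ y * Real.exp (-(lam F₁ y))) * ENNReal.ofReal (J y) := by
          have A1 : ∫⁻ y in Set.Ioi (0:ℝ),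
              ENNReal.ofReal (F₁ y * Real.exp (-(lam F₁ y))) * H1 y
              = ∫⁻ y in Set.Ioi (0:ℝ), Set.indicator (Set.Ioi t)
                  (fun y => ENNReal.ofReal (F₁ y * Real.exp (-(lam F₁ y)))
                    * ENNReal.ofReal (J y)) y :=
            lintegral_congr fun y => e1 y
          rw [A1, lintegral_indicator measurableSet_Ioi,
            Measure.restrict_restrict measurableSet_Ioi, hIoiInt]
      _ = ∫⁻ y in Set.Ioc t s,
            ENNReal.ofReal (F₁ y * Real.exp (-(lam F₁ y))) * ENNReal.ofReal (J y) := by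
          rw [← Set.Ioc_union_Ioi_eq_Ioi hts, lintegral_union measurableSet_Ioi
            (Set.Ioc_disjoint_Ioi le_rfl)]
          have hz : ∫⁻ y in Set.Ioi s,
              ENNReal.ofReal (F₁ y * Real.exp (-(lam F₁ y))) * ENNReal.ofReal (J y) = 0 := by
            have : ∀ y ∈ Set.Ioi s,
                ENNReal.ofReal (F₁ y * Real.exp (-(lam F₁ y))) * ENNReal.ofReal (J y) = 0 := by
              intro y hy
              have : J y = 0 := by
                have he : Set.Ioc (0:ℝ) (s - y) = ∅ :=
                  Set.Ioc_eq_empty (by simp only [not_lt]; linarith [Set.mem_Ioi.mp hy])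
                simp only [hJdef, he, Measure.restrict_empty, integral_zero_measure]
              rw [this, ENNReal.ofReal_zero, mul_zero]
            rw [setLIntegral_congr_fun measurableSet_Ioi this,
              lintegral_zero]
          rw [hz, add_zero]
      _ = ∫⁻ y in Set.Ioc t s, ENNReal.ofReal (J y * Real.exp (-Λ₁ y) * f₁ y) := by
          apply setLIntegral_congr_fun measurableSet_Ioc
          intro y hy
          beta_reduce
          have hypos : y ∈ Set.Ioi (0:ℝ) := Set.mem_Ioi.mpr (lt_of_le_of_lt ht0 hy.1)
          rw [hF₁def, Set.indicator_of_mem hypos, hlam₁ y,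
            ← ENNReal.ofReal_mul (mul_nonneg (hf₁_nonneg y (le_of_lt hypos))
              (Real.exp_pos _).le)]
          congr 1
          ring
      _ = ENNReal.ofReal (∫ y in Set.Ioc t s, J y * Real.exp (-Λ₁ y) * f₁ y) := by
          have hf₁int : IntegrableOn f₁ (Set.Ioc t s) := by
            refine IntegrableOn.congr_fun ((hN₁.intOn s).mono_set
              (Set.Ioc_subset_Ioc_left ht0)) ?_ measurableSet_Ioc
            intro x hx
            exact Set.indicator_of_mem (Set.mem_Ioi.mpr (lt_of_le_of_lt ht0 hx.1)) f₁
          have hJbd : ∀ y ∈ Set.Ioc t s, J y ≤ C * lam F₂ s := by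
            intro y hy
            have hy0 : (0:ℝ) ≤ y := le_trans ht0 hy.1.le
            have h1 : J y ≤ ∫ x in Set.Ioc (0:ℝ) (s - y), C * f₂ x := by
              simp only [hJdef]
              apply setIntegral_mono_on (hJint y) ((hf₂int (s - y)).const_mul C)
                measurableSet_Ioc
              intro x hx
              have hf2x : 0 ≤ f₂ x := hf₂_nonneg x hx.1.le
              have hexple : Real.exp (-Λ₂ x) ≤ 1 := by
                rw [← Real.exp_zero]
                apply Real.exp_le_exp.mpr
                have : 0 ≤ Λ₂ x := (hlam₂ x) ▸ lam_nonneg hN₂ x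
                linarith
              calc Z (y + x) * Real.exp (-Λ₂ x) * f₂ x ≤ (C * 1) * f₂ x := by
                    apply mul_le_mul_of_nonneg_right _ hf2x
                    exact mul_le_mul (hC _) hexple (Real.exp_pos _).le hC0
                _ = C * f₂ x := by ring
            have h2 : ∫ x in Set.Ioc (0:ℝ) (s - y), C * f₂ x = C * lam F₂ (s - y) := by
              rw [integral_const_mul]
              congr 1
              rw [lam_indicator_eq]
            have h3 : lam F₂ (s - y) ≤ lam F₂ s := lam_mono hN₂ (by linarith)
            calc J y ≤ C * lam F₂ (s - y) := h1.trans_eq h2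
              _ ≤ C * lam F₂ s := mul_le_mul_of_nonneg_left h3 hC0
          have hJmeas : Measurable J := by
            have hGG : StronglyMeasurable fun p : ℝ × ℝ =>
                Set.indicator {q : ℝ × ℝ | 0 < q.2 ∧ q.2 ≤ s - q.1}
                  (fun q => Z (q.1 + q.2) * Real.exp (-Λ₂ q.2) * f₂ q.2) p := by
              apply Measurable.stronglyMeasurable
              apply Measurable.indicator hinner_meas
              exact (measurableSet_lt measurable_const measurable_snd).inter
                (measurableSet_le measurable_snd (measurable_const.sub measurable_fst))
            have hSM := hGG.integral_prod_right' (ν := volume)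
            have hJeq : J = fun y => ∫ x : ℝ,
                Set.indicator {q : ℝ × ℝ | 0 < q.2 ∧ q.2 ≤ s - q.1}
                  (fun q => Z (q.1 + q.2) * Real.exp (-Λ₂ q.2) * f₂ q.2) (y, x) := by
              funext y
              simp only [hJdef]
              rw [← integral_indicator measurableSet_Ioc]
              rfl
            rw [hJeq]
            exact hSM.measurable
          have hint : IntegrableOn (fun y => J y * Real.exp (-Λ₁ y) * f₁ y) (Set.Ioc t s) := by
            refine Integrable.mono' (hf₁int.const_mul (C * lam F₂ s))
              ((hJmeas.mul (Real.measurable_exp.comp hΛ₁meas.neg)).mul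
                hf₁_meas).aestronglyMeasurable ?_
            filter_upwards [ae_restrict_mem measurableSet_Ioc] with y hy
            have hy0 : (0:ℝ) < y := lt_of_le_of_lt ht0 hy.1
            have hf1y : 0 ≤ f₁ y := hf₁_nonneg y hy0.le
            have hexple : Real.exp (-Λ₁ y) ≤ 1 := by
              rw [← Real.exp_zero]
              apply Real.exp_le_exp.mpr
              have : 0 ≤ Λ₁ y := (hlam₁ y) ▸ lam_nonneg hN₁ y
              linarith
            have h1 : 0 ≤ J y * Real.exp (-Λ₁ y) * f₁ y :=
              mul_nonneg (mul_nonneg (hJnonneg y) (Real.exp_pos _).le) hf1y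
            rw [Real.norm_eq_abs, abs_of_nonneg h1]
            calc J y * Real.exp (-Λ₁ y) * f₁ y ≤ (C * lam F₂ s * 1) * f₁ y := by
                  apply mul_le_mul_of_nonneg_right _ hf1y
                  exact mul_le_mul (hJbd y hy) hexple (Real.exp_pos _).le
                    (le_trans (hJnonneg y) (hJbd y hy))
              _ = C * lam F₂ s * f₁ y := by ring
          rw [← ofReal_integral_eq_lintegral_ofReal hint ?_]
          filter_upwards [ae_restrict_mem measurableSet_Ioc] with y hy
          exact mul_nonneg (mul_nonneg (hJnonneg y) (Real.exp_pos _).le)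
            (hf₁_nonneg y (le_trans ht0 hy.1.le))
  calc ∫⁻ ω in {ω | t < T₁ ω ∧ T₂ ω ≤ s}, ENNReal.ofReal (Z (T₂ ω)) ∂Phat
      = ∫⁻ ω, KK (ginv F₁ (E₁ ω), ginv F₂ (E₂ ω)) ∂Phat := step1
    _ = ∫⁻ u, ∫⁻ v, KK (ginv F₁ u, ginv F₂ v) ∂expM ∂expM := step2
    _ = ∫⁻ u, H1 (ginv F₁ u) ∂expM := lintegral_congr fun u => step3 u
    _ = ∫⁻ y in Set.Ioi (0:ℝ), ENNReal.ofReal (F₁ y * Real.exp (-(lam F₁ y))) * H1 y := step4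
    _ = ENNReal.ofReal (∫ y in Set.Ioc t s, J y * Real.exp (-Λ₁ y) * f₁ y) := final
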